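/- arXiv:1702.06360 — 4 statements merged into one kernel-verified Lean document; each statement's English description precedes it below -/
import Mathlib

section
/- Let D₁ and D₂ be n×n real diagonal matrices with diagonal entries p₁, …, p_n and q₁, …, q_n respectively, let A and B be n×n symmetric binary matrices with zero diagonal, and let s ∈ {1, −1}. Then (D₁ + sA)(D₂ + sB) = (D₂ + sB)(D₁ + sA) if and only if for all indices i, j with 1 ≤ i, j ≤ n: ( #{k : A i k = 1 ∧ B j k = 1} − #{k : A j k = 1 ∧ B i k = 1} ) + s · ( B i j · (p_i − p_j) + A i j · (q_j − q_i) ) = 0. -/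
open Matrix

lemma binary_mul_sum_card {n : ℕ} (f g : Fin n → ℝ)
    (hf : ∀ k, f k = 0 ∨ f k = 1) (hg : ∀ k, g k = 0 ∨ g k = 1) :
    (∑ k, f k * g k) = ((Finset.univ.filter fun k => f k = 1 ∧ g k = 1).card : ℝ) := by
  rw [Finset.card_filter]
  push_cast
  refine Finset.sum_congr rfl fun k _ => ?_
  rcases hf k with h1 | h1 <;> rcases hg k with h2 | h2 <;> simp [h1, h2]

/-- Let `D₁ = diagonal p`, `D₂ = diagonal q` be real diagonal matrices,
`A`, `B` symmetric binary matrices with zero diagonal, and `s ∈ {1, −1}`. Then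
`(D₁ + s • A) * (D₂ + s • B) = (D₂ + s • B) * (D₁ + s • A)` iff for all `i, j`:
`(#{k : A i k = 1 ∧ B j k = 1} − #{k : A j k = 1 ∧ B i k = 1})
  + s * (B i j * (p i − p j) + A i j * (q j − q i)) = 0`. -/
theorem two_laplacian_blocks_commute_iff {n : ℕ}
    (p q : Fin n → ℝ)
    (A B : Matrix (Fin n) (Fin n) ℝ)
    (hA : ∀ i j, A i j = 0 ∨ A i j = 1)
    (hAsymm : Aᵀ = A)
    (hAdiag : ∀ i, A i i = 0)
    (hB : ∀ i j, B i j = 0 ∨ B i j = 1)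
    (hBsymm : Bᵀ = B)
    (hBdiag : ∀ i, B i i = 0)
    (s : ℝ) (hs : s = 1 ∨ s = -1) :
    (Matrix.diagonal p + s • A) * (Matrix.diagonal q + s • B) =
      (Matrix.diagonal q + s • B) * (Matrix.diagonal p + s • A) ↔
      ∀ i j : Fin n,
        (((Finset.univ.filter fun k => A i k = 1 ∧ B j k = 1).card : ℝ) -
          ((Finset.univ.filter fun k => A j k = 1 ∧ B i k = 1).card : ℝ)) +
          s * (B i j * (p i - p j) + A i j * (q j - q i)) = 0 := by
  have hs2 : s * s = 1 := by rcases hs with h | h <;> rw [h] <;> ring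
  have hAB : ∀ i j : Fin n, (A * B) i j =
      ((Finset.univ.filter fun k => A i k = 1 ∧ B j k = 1).card : ℝ) := by
    intro i j
    rw [Matrix.mul_apply]
    have : ∀ k, B k j = B j k := fun k => by
      conv_lhs => rw [← hBsymm, Matrix.transpose_apply]
    simp_rw [this]
    exact binary_mul_sum_card _ _ (fun k => hA i k) (fun k => hB j k)
  have hBA : ∀ i j : Fin n, (B * A) i j =
      ((Finset.univ.filter fun k => A j k = 1 ∧ B i k = 1).card : ℝ) := by
    intro i j
    rw [Matrix.mul_apply]
    have : ∀ k, A k j = A j k := fun k => by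
      conv_lhs => rw [← hAsymm, Matrix.transpose_apply]
    simp_rw [this, mul_comm (B i _)]
    exact binary_mul_sum_card _ _ (fun k => hA j k) (fun k => hB i k)
  have key : ∀ i j : Fin n,
      ((Matrix.diagonal p + s • A) * (Matrix.diagonal q + s • B)) i j -
      ((Matrix.diagonal q + s • B) * (Matrix.diagonal p + s • A)) i j =
      (((Finset.univ.filter fun k => A i k = 1 ∧ B j k = 1).card : ℝ) -
        ((Finset.univ.filter fun k => A j k = 1 ∧ B i k = 1).card : ℝ)) +
        s * (B i j * (p i - p j) + A i j * (q j - q i)) := by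
    intro i j
    rw [← hAB i j, ← hBA i j]
    simp only [Matrix.add_mul, Matrix.mul_add, Matrix.smul_mul, Matrix.mul_smul, smul_smul,
      Matrix.add_apply, Matrix.smul_apply, Matrix.diagonal_mul, Matrix.mul_diagonal,
      Matrix.diagonal_mul_diagonal, smul_eq_mul, hs2, one_mul, Matrix.diagonal_apply]
    have hs2' : s ^ 2 = 1 := by rw [sq]; exact hs2
    split_ifs with h
    · subst h
      linear_combination ((A * B) i i - (B * A) i i) * hs2'
    · linear_combination ((A * B) i j - (B * A) i j) * hs2'
  rw [← Matrix.ext_iff]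
  refine forall_congr' fun i => forall_congr' fun j => ?_
  rw [← sub_eq_zero, key i j]
end

section
/- Let G be the complete graph on the vertex set Fin m × Fin n with N = mn ≥ 2, let A be its adjacency matrix, D its degree matrix, d = N(N−1) its total degree, and for s ∈ {1, −1} let ρ = (1/d)(D + sA) (signless Laplacian density matrix for s = 1, Laplacian density matrix for s = −1). For μ, ν ∈ Fin m let ρ_{μν} be the n×n block of ρ with (i,j)-entry ρ (μ,i) (ν,j). Then every block ρ_{μν} is a normal matrix, and all the blocks pairwise commute: ρ_{μν} ρ_{αβ} = ρ_{αβ} ρ_{μν} for all μ, ν, α, β ∈ Fin m. -/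
open Matrix

private lemma aJ_comm {n : ℕ} (a b c d : ℝ) :
    ((a • (1 : Matrix (Fin n) (Fin n) ℝ) + b • Matrix.of (fun _ _ => (1:ℝ))) *
      (c • (1 : Matrix (Fin n) (Fin n) ℝ) + d • Matrix.of (fun _ _ => (1:ℝ)))) =
    ((c • (1 : Matrix (Fin n) (Fin n) ℝ) + d • Matrix.of (fun _ _ => (1:ℝ))) *
      (a • (1 : Matrix (Fin n) (Fin n) ℝ) + b • Matrix.of (fun _ _ => (1:ℝ)))) := by
  show Commute _ _
  apply Commute.add_left
  · exact (Commute.one_left _).smul_left a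
  · apply Commute.smul_left
    apply Commute.add_right
    · exact (Commute.one_right _).smul_right c
    · exact (Commute.refl _).smul_right d

/-- For the complete graph `G` on `Fin m × Fin n` (with `N = m*n ≥ 2`),
the density matrix `ρ = (1/(N(N−1))) • (D + s • A)` (for `s ∈ {1,−1}`, with `A` the
adjacency matrix and `D` the degree matrix) has all of its n×n blocks normal, and
all blocks pairwise commute. -/
theorem complete_graph_blocks_normal_commute {m n : ℕ} (hmn : 2 ≤ m * n)
    (G : SimpleGraph (Fin m × Fin n)) [DecidableRel G.Adj] (hG : G = ⊤)
    (s : ℝ) (hs : s = 1 ∨ s = -1)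
    (ρ : Matrix (Fin m × Fin n) (Fin m × Fin n) ℝ)
    (hρ : ρ = (((m * n : ℝ)) * ((m * n : ℝ) - 1))⁻¹ •
        (Matrix.diagonal (fun v => (G.degree v : ℝ)) + s • G.adjMatrix ℝ))
    (blk : Fin m → Fin m → Matrix (Fin n) (Fin n) ℝ)
    (hblk : ∀ μ ν, blk μ ν = Matrix.of fun i j => ρ (μ, i) (ν, j)) :
    (∀ μ ν, blk μ ν * (blk μ ν)ᵀ = (blk μ ν)ᵀ * blk μ ν) ∧
      (∀ μ ν α β, blk μ ν * blk α β = blk α β * blk μ ν) := by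
  set c : ℝ := (((m * n : ℝ)) * ((m * n : ℝ) - 1))⁻¹ with hc
  have hdeg : ∀ v : Fin m × Fin n, (G.degree v : ℝ) = (m * n : ℝ) - 1 := by
    intro v
    have h1 : G.degree v = m * n - 1 := by
      have : G.degree v = Fintype.card (Fin m × Fin n) - 1 := by
        subst hG
        convert SimpleGraph.complete_graph_degree v
      simpa using this
    rw [h1]
    have h2 : 1 ≤ m * n := le_trans (by norm_num) hmn
    push_cast [Nat.cast_sub h2]
    ring
  have key : ∀ μ ν, blk μ ν =
      (if μ = ν then c * ((m * n : ℝ) - 1 - s) else 0) •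
        (1 : Matrix (Fin n) (Fin n) ℝ) +
      (c * s) • Matrix.of (fun _ _ => (1:ℝ)) := by
    intro μ ν
    rw [hblk]
    ext i j
    simp only [hρ, Matrix.of_apply, Matrix.smul_apply, Matrix.add_apply,
      Matrix.diagonal_apply, SimpleGraph.adjMatrix_apply, Matrix.one_apply, hG,
      SimpleGraph.top_adj, smul_eq_mul, hdeg]
    by_cases hμν : μ = ν <;> by_cases hij : i = j <;>
      simp_all [Prod.ext_iff, hdeg] <;> ring
  have comm : ∀ μ ν α β, blk μ ν * blk α β = blk α β * blk μ ν := by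
    intro μ ν α β
    rw [key, key]
    exact aJ_comm _ _ _ _
  refine ⟨?_, comm⟩
  intro μ ν
  have hsym : ∀ x y, ρ x y = ρ y x := by
    intro x y
    simp only [hρ, Matrix.smul_apply, Matrix.add_apply, Matrix.diagonal_apply,
      SimpleGraph.adjMatrix_apply]
    by_cases h : x = y
    · subst h; rfl
    · rw [if_neg h, if_neg (Ne.symm h)]
      by_cases hxy : G.Adj x y
      · simp [hxy, (G.adj_comm x y).mp hxy]
      · have hyx : ¬G.Adj y x := fun h' => hxy ((G.adj_comm x y).mpr h')
        simp [hxy, hyx]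
  have htr : (blk μ ν)ᵀ = blk ν μ := by
    ext i j
    simp only [hblk, Matrix.transpose_apply, Matrix.of_apply]
    exact hsym _ _
  rw [htr]
  exact comm μ ν ν μ
end

section
/- Fix d ≥ 2 and x ∈ [0,1] with x ≠ 1/d. Let F be the d²×d² swap matrix indexed by Fin d × Fin d with entries F (a,b) (c,e) = 1 if a = e and b = c, and 0 otherwise, and let ρ = ((d−x)/(d³−d)) I + ((xd−1)/(d³−d)) F be the Werner state. Then for any μ ≠ ν in Fin d, the (μ,ν)-block B of ρ (the d×d matrix with B i j = ρ (μ,i) (ν,j)) equals ((xd−1)/(d³−d)) times the matrix unit E_{νμ}, and B is not normal: B Bᵀ ≠ Bᵀ B. -/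
open Matrix

/-- For `d ≥ 2` and `x ∈ [0,1]` with `x ≠ 1/d`, the Werner state
`ρ = ((d−x)/(d³−d)) • I + ((xd−1)/(d³−d)) • F`, where `F` is the swap matrix, has
every off-diagonal (μ,ν)-block `B` equal to `((xd−1)/(d³−d))` times the matrix unit
`E_{νμ}`, and `B` is not normal. -/
theorem werner_offdiag_block_eq_stdBasis_and_not_normal {d : ℕ} (hd : 2 ≤ d)
    (x : ℝ) (hx : x ∈ Set.Icc (0 : ℝ) 1) (hxd : x ≠ 1 / d)
    (F : Matrix (Fin d × Fin d) (Fin d × Fin d) ℝ)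
    (hF : ∀ a b c e : Fin d, F (a, b) (c, e) = if a = e ∧ b = c then 1 else 0)
    (ρ : Matrix (Fin d × Fin d) (Fin d × Fin d) ℝ)
    (hρ : ρ = (((d : ℝ) - x) / ((d : ℝ) ^ 3 - d)) • (1 : Matrix (Fin d × Fin d) (Fin d × Fin d) ℝ)
        + ((x * d - 1) / ((d : ℝ) ^ 3 - d)) • F) :
    ∀ μ ν : Fin d, μ ≠ ν →
      ∀ B : Matrix (Fin d) (Fin d) ℝ, B = Matrix.of (fun i j => ρ (μ, i) (ν, j)) →
        B = ((x * d - 1) / ((d : ℝ) ^ 3 - d)) • Matrix.single ν μ (1 : ℝ) ∧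
          B * Bᵀ ≠ Bᵀ * B := by
  intro μ ν hμν B hB
  set c : ℝ := (x * d - 1) / ((d : ℝ) ^ 3 - d) with hc
  have hd1 : (1 : ℝ) < d := by exact_mod_cast Nat.lt_of_lt_of_le Nat.one_lt_two hd
  have hd0 : (0 : ℝ) < d := lt_trans one_pos hd1
  have hden : (d : ℝ) ^ 3 - d ≠ 0 := by nlinarith [hd1, hd0, sq_nonneg ((d:ℝ)-1)]
  have hnum : x * d - 1 ≠ 0 := by
    intro h
    apply hxd
    field_simp
    linarith
  have hcne : c ≠ 0 := div_ne_zero hnum hden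
  have hBeq : B = c • Matrix.single ν μ (1 : ℝ) := by
    subst hB hρ
    ext i j
    simp only [Matrix.of_apply, Matrix.add_apply, Matrix.smul_apply, Matrix.one_apply,
      hF, Matrix.single, Matrix.of_apply, smul_eq_mul]
    have h1 : ((μ, i) : Fin d × Fin d) ≠ (ν, j) := by
      simp [Prod.ext_iff]; intro h; exact absurd h hμν
    rw [if_neg h1]
    by_cases h2 : μ = j ∧ i = ν
    · rw [if_pos h2, if_pos ⟨h2.2.symm, h2.1⟩]; ring
    · rw [if_neg h2, if_neg (fun h => h2 ⟨h.2, h.1.symm⟩)]; ring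
  refine ⟨hBeq, ?_⟩
  intro h
  have := congrFun (congrFun h ν) ν
  rw [hBeq] at this
  simp only [Matrix.mul_apply, Matrix.transpose_apply, Matrix.smul_apply,
    Matrix.single, Matrix.of_apply, smul_eq_mul] at this
  simp only [true_and, mul_ite, mul_one, mul_zero, ite_mul, zero_mul] at this
  simp [Finset.sum_ite_eq, hμν, mul_self_ne_zero.mpr hcne] at this
end

section
/- There exist two isomorphic simple graphs G and H on the vertex set Fin 2 × Fin 3 (i.e. there is a graph isomorphism between G and H) such that, partitioning their Laplacian matrices into four 3×3 blocks according to the first coordinate, every block of L(G) is normal and all blocks of L(G) pairwise commute, while the blocks of L(H) do not all pairwise commute. In particular, normality and pairwise commutativity of the blocks of the Laplacian (equivalently, zero quantum discord of ρ_l) is not invariant under graph isomorphism. -/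
open Matrix

/-- The real Laplacian matrix `D − A` of a simple graph on `Fin 2 × Fin 3`. -/
noncomputable def lapMatrixR (G : SimpleGraph (Fin 2 × Fin 3)) :
    Matrix (Fin 2 × Fin 3) (Fin 2 × Fin 3) ℝ :=
  haveI : DecidableRel G.Adj := Classical.decRel _
  G.lapMatrix ℝ

/-- The (μ,ν)-block of a matrix indexed by `Fin 2 × Fin 3`, obtained by fixing the
first coordinates to `μ` and `ν`. -/
def blockOf (M : Matrix (Fin 2 × Fin 3) (Fin 2 × Fin 3) ℝ) (μ ν : Fin 2) :
    Matrix (Fin 3) (Fin 3) ℝ :=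
  Matrix.of fun i j => M (μ, i) (ν, j)

def Gg : SimpleGraph (Fin 2 × Fin 3) where
  Adj u v := u.1 ≠ v.1
  symm := ⟨fun _ _ h => Ne.symm h⟩
  loopless := ⟨fun _ h => h rfl⟩

instance : DecidableRel Gg.Adj := fun u v =>
  inferInstanceAs (Decidable (u.1 ≠ v.1))

def ee : Equiv.Perm (Fin 2 × Fin 3) := Equiv.swap (0,0) (1,0)

def Hg : SimpleGraph (Fin 2 × Fin 3) where
  Adj u v := (ee u).1 ≠ (ee v).1
  symm := ⟨fun _ _ h => Ne.symm h⟩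
  loopless := ⟨fun _ h => h rfl⟩

instance : DecidableRel Hg.Adj := fun u v =>
  inferInstanceAs (Decidable ((ee u).1 ≠ (ee v).1))

lemma lapR_eq (G : SimpleGraph (Fin 2 × Fin 3)) [inst : DecidableRel G.Adj] :
    lapMatrixR G = G.lapMatrix ℝ := by
  unfold lapMatrixR
  have : (Classical.decRel (fun a b => G.Adj a b) : DecidableRel G.Adj) = inst := by
    funext a b; exact Subsingleton.elim _ _
  rw [this]

lemma degG (v : Fin 2 × Fin 3) : Gg.degree v = 3 := by revert v; decide

lemma degH (v : Fin 2 × Fin 3) : Hg.degree v = 3 := by revert v; decide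

lemma lapG (u v : Fin 2 × Fin 3) :
    lapMatrixR Gg u v = (if u = v then (3:ℝ) else 0) - (if u.1 ≠ v.1 then 1 else 0) := by
  rw [lapR_eq]
  simp only [SimpleGraph.lapMatrix, Matrix.sub_apply, SimpleGraph.degMatrix,
    Matrix.diagonal_apply, SimpleGraph.adjMatrix_apply, degG]
  by_cases h : u.1 = v.1 <;>
    simp [h, show Gg.Adj u v ↔ u.1 ≠ v.1 from Iff.rfl]

lemma lapH (u v : Fin 2 × Fin 3) :
    lapMatrixR Hg u v = (if u = v then (3:ℝ) else 0) - (if (ee u).1 ≠ (ee v).1 then 1 else 0) := by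
  rw [lapR_eq]
  simp only [SimpleGraph.lapMatrix, Matrix.sub_apply, SimpleGraph.degMatrix,
    Matrix.diagonal_apply, SimpleGraph.adjMatrix_apply, degH]
  by_cases h : (ee u).1 = (ee v).1 <;>
    simp [h, show Hg.Adj u v ↔ (ee u).1 ≠ (ee v).1 from Iff.rfl]

lemma blockG (μ ν : Fin 2) :
    blockOf (lapMatrixR Gg) μ ν =
      if μ = ν then (3:ℝ) • 1 else Matrix.of (fun _ _ => (-1:ℝ)) := by
  ext i j
  simp only [blockOf, of_apply, lapG, Prod.mk.injEq]
  by_cases h : μ = ν <;> by_cases hij : i = j <;>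
    simp [h, hij, Matrix.one_apply, Matrix.smul_apply]

lemma isoGH : Nonempty (Gg ≃g Hg) := by
  refine ⟨⟨ee.symm, ?_⟩⟩
  intro a b
  show (ee (ee.symm a)).1 ≠ (ee (ee.symm b)).1 ↔ _
  rw [Equiv.apply_symm_apply, Equiv.apply_symm_apply]
  exact Iff.rfl


/-- There exist isomorphic simple graphs `G` and `H` on `Fin 2 × Fin 3`
such that all 3×3 blocks of the Laplacian of `G` are normal and pairwise commute,
while the blocks of the Laplacian of `H` do not all pairwise commute. Hence zero
quantum discord of `ρ_l` is not invariant under graph isomorphism. -/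
theorem exists_isomorphic_graphs_discord_not_invariant :
    ∃ (G H : SimpleGraph (Fin 2 × Fin 3)), Nonempty (G ≃g H) ∧
      (∀ μ ν : Fin 2,
        blockOf (lapMatrixR G) μ ν * (blockOf (lapMatrixR G) μ ν)ᵀ =
          (blockOf (lapMatrixR G) μ ν)ᵀ * blockOf (lapMatrixR G) μ ν) ∧
      (∀ μ ν α β : Fin 2,
        blockOf (lapMatrixR G) μ ν * blockOf (lapMatrixR G) α β =
          blockOf (lapMatrixR G) α β * blockOf (lapMatrixR G) μ ν) ∧
      ¬ (∀ μ ν α β : Fin 2,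
        blockOf (lapMatrixR H) μ ν * blockOf (lapMatrixR H) α β =
          blockOf (lapMatrixR H) α β * blockOf (lapMatrixR H) μ ν) := by
  refine ⟨Gg, Hg, isoGH, ?_, ?_, ?_⟩
  · intro μ ν
    rw [blockG]
    split_ifs with h
    · simp [Matrix.transpose_smul]
    · have : (Matrix.of (fun _ _ => (-1:ℝ)) : Matrix (Fin 3) (Fin 3) ℝ)ᵀ =
        Matrix.of (fun _ _ => (-1:ℝ)) := by ext i j; rfl
      rw [this]
  · intro μ ν α β
    rw [blockG, blockG]
    split_ifs with h1 h2 h2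
    · rfl
    · simp [smul_mul_assoc, mul_smul_comm]
    · simp [smul_mul_assoc, mul_smul_comm]
    · rfl
  · intro h
    have h1 := congrFun (congrFun (h 0 0 0 1) 0) 1
    have e00 : ee (0,0) = (1,0) := by decide
    have e01 : ee (0,1) = (0,1) := by decide
    have e02 : ee (0,2) = (0,2) := by decide
    have e10 : ee (1,0) = (0,0) := by decide
    have e11 : ee (1,1) = (1,1) := by decide
    have e12 : ee (1,2) = (1,2) := by decide
    simp only [Matrix.mul_apply, Fin.sum_univ_three, blockOf, of_apply, lapH,
      e00, e01, e02, e10, e11, e12, Prod.mk.injEq] at h1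
    norm_num [Fin.ext_iff] at h1
end
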